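/- There exists an absolute constant c > 0 such that for every finite set S of closed intervals on the real line, every integer k ≥ 1, and every k-maximal independent set I ⊆ S, one has |I| ≥ (1 − c/k) · α(S). -/

import Mathlib

open Finset

/-- A nonempty closed interval `[l, r]` on the real line. -/
structure Ivl where
  l : ℝ
  r : ℝ
  hle : l ≤ r

noncomputable instance : DecidableEq Ivl := Classical.decEq _

/-- Two closed intervals intersect (have a common point). -/
def Ivl.meets (x y : Ivl) : Prop := x.l ≤ y.r ∧ y.l ≤ x.r

/-- The interval `y` is strictly contained in the interval `x`. -/
def Ivl.strictIn (y x : Ivl) : Prop := x.l < y.l ∧ y.r < x.r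

/-- `I` is an independent set (a pairwise disjoint subset) of the interval set `S`. -/
def IsIndep (S I : Finset Ivl) : Prop :=
  I ⊆ S ∧ ∀ x ∈ I, ∀ y ∈ I, x ≠ y → ¬ Ivl.meets x y

/-- `α(S)`: the maximum cardinality of an independent set of `S`. -/
noncomputable def alphaIvl (S : Finset Ivl) : ℕ :=
  sSup {n : ℕ | ∃ I : Finset Ivl, IsIndep S I ∧ I.card = n}

/-- `I` is a `k`-maximal independent set of `S`. -/
def IsKMaximal (S : Finset Ivl) (k : ℕ) (I : Finset Ivl) : Prop :=
  IsIndep S I ∧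
  ∀ t, t ≤ k → ∀ A, A ⊆ I → ∀ B, B ⊆ S \ I →
    A.card = t → B.card = t + 1 → ¬ IsIndep S ((I \ A) ∪ B)

/-- `I` is a `k`-valid independent set of `S`: it is `k`-maximal and no interval of
`S \ I` is strictly contained in an interval of `I` (no-containment property). -/
def IsKValid (S : Finset Ivl) (k : ℕ) (I : Finset Ivl) : Prop :=
  IsKMaximal S k I ∧ ∀ y ∈ S \ I, ∀ x ∈ I, ¬ Ivl.strictIn y x

/-- `(A, B)` induces an alternating path with respect to `I`, witnessed by the
left-to-right orderings `a` of `A` and `b` of `B`: `(I \ A) ∪ B` is independent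
and in the intersection graph of `I ∪ B` the set `A ∪ B` induces exactly the path
`b 0, a 0, b 1, a 1, …, a (t-1), b t` (consecutive intervals of this sequence
intersect, all other pairs among `A ∪ B` are disjoint, and no interval of `I \ A`
intersects an interval of `B`). -/
def IsAltPathWith (S I A B : Finset Ivl) (t : ℕ)
    (a : Fin t → Ivl) (b : Fin (t + 1) → Ivl) : Prop :=
  A ⊆ I ∧ B ⊆ S \ I ∧ A.card = t ∧ B.card = t + 1 ∧
  IsIndep S ((I \ A) ∪ B) ∧
  (∀ i, a i ∈ A) ∧ (∀ i, b i ∈ B) ∧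
  Function.Injective a ∧ Function.Injective b ∧
  (∀ i j : Fin t, i < j → (a i).r < (a j).l) ∧
  (∀ i j : Fin (t + 1), i < j → (b i).r < (b j).l) ∧
  (∀ (i : Fin t) (j : Fin (t + 1)),
    Ivl.meets (a i) (b j) ↔ (j = i.castSucc ∨ j = i.succ)) ∧
  (∀ x ∈ I, x ∉ A → ∀ j : Fin (t + 1), ¬ Ivl.meets x (b j))

/-- `(A, B)` induces an alternating path with respect to `I`. -/
def IsAltPath (S I A B : Finset Ivl) : Prop :=
  ∃ t a b, IsAltPathWith S I A B t a b

/-- The alternating path `(A, B)` is smallest: no alternating path `(A', B')`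
with `A' ⊊ A`. -/
def IsSmallestAltPath (S I A B : Finset Ivl) : Prop :=
  IsAltPath S I A B ∧ ¬ ∃ A' B' : Finset Ivl, A' ⊂ A ∧ IsAltPath S I A' B'

/-- The leftmost right endpoint property for the alternating path with orderings
`a`, `b`: each `b (j+1)` has the leftmost right endpoint among all intervals of `S`
whose left endpoint lies in `[r (b j), r (a j)]`, and `b 0` has the leftmost right
endpoint among all intervals of `S` whose left endpoint lies in `[r a', r (a 0))`,
where `a'` is the interval of `I` immediately to the left of `a 0` (the range is
`(-∞, r (a 0))` if no such interval exists). -/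
def LREP (S I : Finset Ivl) (t : ℕ) (a : Fin t → Ivl) (b : Fin (t + 1) → Ivl) : Prop :=
  (∀ j : Fin t,
    ((b j.castSucc).r ≤ (b j.succ).l ∧ (b j.succ).l ≤ (a j).r) ∧
    ∀ y ∈ S, (b j.castSucc).r ≤ y.l → y.l ≤ (a j).r → (b j.succ).r ≤ y.r) ∧
  (∀ h : 0 < t,
    ((∀ x ∈ I, x.r < (a ⟨0, h⟩).l → x.r ≤ (b 0).l) ∧ (b 0).l < (a ⟨0, h⟩).r) ∧
    ∀ y ∈ S, (∀ x ∈ I, x.r < (a ⟨0, h⟩).l → x.r ≤ y.l) → y.l < (a ⟨0, h⟩).r →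
      (b 0).r ≤ y.r)

/-- The rightmost left endpoint property: the mirror image (exchanging the roles of
left and right) of the leftmost right endpoint property `LREP`. -/
def RLEP (S I : Finset Ivl) (t : ℕ) (a : Fin t → Ivl) (b : Fin (t + 1) → Ivl) : Prop :=
  (∀ j : Fin t,
    ((a j).l ≤ (b j.castSucc).r ∧ (b j.castSucc).r ≤ (b j.succ).l) ∧
    ∀ y ∈ S, (a j).l ≤ y.r → y.r ≤ (b j.succ).l → y.l ≤ (b j.castSucc).l) ∧
  (∀ h : 0 < t,
    ((a ⟨t - 1, Nat.sub_lt h Nat.one_pos⟩).l < (b (Fin.last t)).r ∧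
      (∀ x ∈ I, (a ⟨t - 1, Nat.sub_lt h Nat.one_pos⟩).r < x.l →
        (b (Fin.last t)).r ≤ x.l)) ∧
    ∀ y ∈ S, (a ⟨t - 1, Nat.sub_lt h Nat.one_pos⟩).l < y.r →
      (∀ x ∈ I, (a ⟨t - 1, Nat.sub_lt h Nat.one_pos⟩).r < x.l → y.r ≤ x.l) →
      y.l ≤ (b (Fin.last t)).l)

/-- A proper alternating path: a smallest alternating path satisfying the leftmost
right endpoint property. -/
def IsProperAltPath (S I A B : Finset Ivl) : Prop :=
  IsSmallestAltPath S I A B ∧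
  ∀ t a b, IsAltPathWith S I A B t a b → LREP S I t a b

/-- `B` is a left substitute of `A` (with respect to the `k`-valid independent set
`I` of `S`): `|B| = |A|`, the pair `(A, B)` cannot be extended to an alternating
path of sizes `t`, `t + 1` for any `t ≤ 2k`, and, writing `aj` for the rightmost
interval of `A`, if `aj` were not there then `(A \ {aj}, B)` would be a proper
alternating path. -/
def IsLeftSubstitute (S : Finset Ivl) (k : ℕ) (I A B : Finset Ivl) : Prop :=
  A ⊆ I ∧ B ⊆ S \ I ∧ B.card = A.card ∧
  (∀ t, t ≤ 2 * k → ¬ ∃ A'' B'' : Finset Ivl, A ⊆ A'' ∧ B ⊆ B'' ∧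
    A''.card = t ∧ B''.card = t + 1 ∧ IsAltPath S I A'' B'') ∧
  ∃ aj ∈ A, (∀ x ∈ A, x ≠ aj → x.r < aj.l) ∧
    IsProperAltPath (S.erase aj) (I.erase aj) (A.erase aj) B

/-- `B` is a right substitute of `A`: defined symmetrically to `IsLeftSubstitute`,
with the leftmost interval `a1` of `A` in place of the rightmost one. -/
def IsRightSubstitute (S : Finset Ivl) (k : ℕ) (I A B : Finset Ivl) : Prop :=
  A ⊆ I ∧ B ⊆ S \ I ∧ B.card = A.card ∧
  (∀ t, t ≤ 2 * k → ¬ ∃ A'' B'' : Finset Ivl, A ⊆ A'' ∧ B ⊆ B'' ∧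
    A''.card = t ∧ B''.card = t + 1 ∧ IsAltPath S I A'' B'') ∧
  ∃ a1 ∈ A, (∀ x ∈ A, x ≠ a1 → a1.r < x.l) ∧
    IsProperAltPath (S.erase a1) (I.erase a1) (A.erase a1) B

/-- The set of intervals of `I` meeting some interval of `B`. -/
noncomputable def nbr (I B : Finset Ivl) : Finset Ivl :=
  @Finset.filter _ (fun x => ∃ y ∈ B, Ivl.meets x y) (Classical.decPred _) I

lemma nbr_subset (I B : Finset Ivl) : nbr I B ⊆ I := by
  letI : DecidablePred fun x : Ivl => ∃ y ∈ B, Ivl.meets x y := Classical.decPred _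
  unfold nbr
  exact Finset.filter_subset _ _

lemma mem_nbr {I B : Finset Ivl} {x : Ivl} :
    x ∈ nbr I B ↔ x ∈ I ∧ ∃ y ∈ B, Ivl.meets x y := by
  letI : DecidablePred fun x : Ivl => ∃ y ∈ B, Ivl.meets x y := Classical.decPred _
  unfold nbr
  exact Finset.mem_filter

lemma nbr_mono (I : Finset Ivl) {B C : Finset Ivl} (h : B ⊆ C) : nbr I B ⊆ nbr I C := by
  intro x hx
  rw [mem_nbr] at hx ⊢
  obtain ⟨hxI, y, hy, hm⟩ := hx
  exact ⟨hxI, y, h hy, hm⟩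

lemma nbr_union (I B C : Finset Ivl) : nbr I (B ∪ C) = nbr I B ∪ nbr I C := by
  ext x
  simp only [mem_nbr, Finset.mem_union]
  constructor
  · rintro ⟨hxI, y, hy | hy, hm⟩
    · exact Or.inl ⟨hxI, y, hy, hm⟩
    · exact Or.inr ⟨hxI, y, hy, hm⟩
  · rintro (⟨hxI, y, hy, hm⟩ | ⟨hxI, y, hy, hm⟩)
    · exact ⟨hxI, y, Or.inl hy, hm⟩
    · exact ⟨hxI, y, Or.inr hy, hm⟩

lemma not_meets_cases {x y : Ivl} (h : ¬ Ivl.meets x y) : y.r < x.l ∨ x.r < y.l := by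
  unfold Ivl.meets at h
  push_neg at h
  by_cases h1 : x.l ≤ y.r
  · exact Or.inr (h h1)
  · exact Or.inl (lt_of_not_ge h1)

/-- From a pairwise-disjoint family one can extract the `m` leftmost intervals. -/
lemma pick_left : ∀ (m : ℕ) (s : Finset Ivl),
    (∀ x ∈ s, ∀ y ∈ s, x ≠ y → ¬ Ivl.meets x y) → m ≤ s.card →
    ∃ B ⊆ s, B.card = m ∧ ∀ y ∈ B, ∀ z ∈ s \ B, y.r < z.l := by
  intro m
  induction m with
  | zero =>
    intro s _ _
    exact ⟨∅, Finset.empty_subset _, rfl, by simp⟩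
  | succ m ih =>
    intro s hs hm
    have hne : s.Nonempty := Finset.card_pos.mp (lt_of_lt_of_le (Nat.succ_pos m) hm)
    obtain ⟨y0, hy0, hy0min⟩ := s.exists_min_image (fun y => y.r) hne
    have hcard' : m ≤ (s.erase y0).card := by
      rw [Finset.card_erase_of_mem hy0]; omega
    obtain ⟨B', hB'sub, hB'card, hB'⟩ := ih (s.erase y0)
      (fun x hx y hy hxy => hs x (Finset.mem_of_mem_erase hx) y (Finset.mem_of_mem_erase hy) hxy)
      hcard'
    have hy0B' : y0 ∉ B' := fun h => (Finset.mem_erase.mp (hB'sub h)).1 rfl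
    refine ⟨insert y0 B', ?_, ?_, ?_⟩
    · intro x hx
      rcases Finset.mem_insert.mp hx with h | h
      · exact h ▸ hy0
      · exact Finset.mem_of_mem_erase (hB'sub h)
    · rw [Finset.card_insert_of_notMem hy0B', hB'card]
    · intro y hy z hz
      have hzs : z ∈ s := (Finset.mem_sdiff.mp hz).1
      have hzni : z ∉ insert y0 B' := (Finset.mem_sdiff.mp hz).2
      have hzy0 : z ≠ y0 := fun h => hzni (h ▸ Finset.mem_insert_self _ _)
      rcases Finset.mem_insert.mp hy with h | h
      · subst h
        have hnm : ¬ Ivl.meets y z := hs y hy0 z hzs (fun h => hzy0 h.symm)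
        rcases not_meets_cases hnm with h1 | h1
        · have := hy0min z hzs
          have := z.hle
          have := y.hle
          linarith
        · exact h1
      · have hz' : z ∈ (s.erase y0) \ B' := by
          rw [Finset.mem_sdiff, Finset.mem_erase]
          exact ⟨⟨hzy0, hzs⟩, fun hc => hzni (Finset.mem_insert_of_mem hc)⟩
        exact hB' y h z hz'

/-- Key counting lemma: if Hall's condition holds for all subsets of `J` of size
at most `k + 1`, then `k * |J| ≤ (k + 1) * |nbr I J|`. -/
lemma key_count (k : ℕ) (I : Finset Ivl)
    (hI : ∀ x ∈ I, ∀ y ∈ I, x ≠ y → ¬ Ivl.meets x y) :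
    ∀ n (J : Finset Ivl), J.card = n →
    (∀ x ∈ J, ∀ y ∈ J, x ≠ y → ¬ Ivl.meets x y) →
    (∀ B ⊆ J, B.card ≤ k + 1 → B.card ≤ (nbr I B).card) →
    k * J.card ≤ (k + 1) * (nbr I J).card := by
  intro n
  induction n using Nat.strong_induction_on with
  | _ n ihn =>
    intro J hJcard hJ hHall
    by_cases hsmall : J.card ≤ k + 1
    · have h1 : J.card ≤ (nbr I J).card := hHall J Finset.Subset.rfl hsmall
      calc k * J.card ≤ (k + 1) * J.card := Nat.mul_le_mul_right _ (Nat.le_succ k)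
        _ ≤ (k + 1) * (nbr I J).card := Nat.mul_le_mul_left _ h1
    · push_neg at hsmall
      obtain ⟨B, hBsub, hBcard, hBleft⟩ := pick_left (k + 1) J hJ (le_of_lt hsmall)
      set J2 := J \ B with hJ2def
      have hunion : B ∪ J2 = J := Finset.union_sdiff_of_subset hBsub
      have hnbrU : nbr I J = nbr I B ∪ nbr I J2 := by
        rw [← hunion, nbr_union]
      have hinter : (nbr I B ∩ nbr I J2).card ≤ 1 := by
        rw [Finset.card_le_one]
        intro a ha b hb
        by_contra hab
        obtain ⟨haB, haJ2⟩ := Finset.mem_inter.mp ha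
        obtain ⟨hbB, hbJ2⟩ := Finset.mem_inter.mp hb
        obtain ⟨haI, ya, hya, hma⟩ := mem_nbr.mp haB
        obtain ⟨-, ya2, hya2, hma2⟩ := mem_nbr.mp haJ2
        obtain ⟨hbI, yb, hyb, hmb⟩ := mem_nbr.mp hbB
        obtain ⟨-, yb2, hyb2, hmb2⟩ := mem_nbr.mp hbJ2
        have hnm : ¬ Ivl.meets a b := hI a haI b hbI hab
        rcases not_meets_cases hnm with h1 | h1
        · -- b.r < a.l ; use a meets ya ∈ B and b meets yb2 ∈ J2
          have h2 : ya.r < yb2.l := hBleft ya hya yb2 hyb2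
          obtain ⟨hma1, hma22⟩ := hma
          obtain ⟨hmb1, hmb22⟩ := hmb2
          -- a.l ≤ ya.r, yb2.l ≤ b.r
          linarith
        · -- a.r < b.l ; use b meets yb ∈ B and a meets ya2 ∈ J2
          have h2 : yb.r < ya2.l := hBleft yb hyb ya2 hya2
          obtain ⟨hmb1, hmb22⟩ := hmb
          obtain ⟨hma1, hma22⟩ := hma2
          linarith
      have hcards : (nbr I J).card + (nbr I B ∩ nbr I J2).card
          = (nbr I B).card + (nbr I J2).card := by
        rw [hnbrU]
        exact Finset.card_union_add_card_inter _ _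
      have hJ2card : J2.card = J.card - (k + 1) := by
        rw [hJ2def, Finset.card_sdiff_of_subset hBsub, hBcard]
      have hq : J.card = J2.card + (k + 1) := by omega
      have hIH : k * J2.card ≤ (k + 1) * (nbr I J2).card := by
        apply ihn (J.card - (k + 1)) (by omega) J2 (by omega)
        · intro x hx y hy hxy
          exact hJ x (Finset.sdiff_subset hx) y (Finset.sdiff_subset hy) hxy
        · intro B' hB' hB'card
          exact hHall B' (hB'.trans Finset.sdiff_subset) hB'card
      have hp1 : k + 1 ≤ (nbr I B).card := by
        have := hHall B hBsub (le_of_eq hBcard)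
        omega
      -- linear arithmetic with the products
      set q2 := J2.card
      set p := (nbr I J).card
      set p1 := (nbr I B).card
      set p2 := (nbr I J2).card
      set i := (nbr I B ∩ nbr I J2).card
      have e1 : (k + 1) * p + (k + 1) * i = (k + 1) * p1 + (k + 1) * p2 := by
        rw [← Nat.mul_add, ← Nat.mul_add, hcards]
      have e2 : (k + 1) * i ≤ (k + 1) * 1 := Nat.mul_le_mul_left _ hinter
      have e3 : (k + 1) * (k + 1) ≤ (k + 1) * p1 := Nat.mul_le_mul_left _ hp1
      have e4 : (k + 1) * (k + 1) = k * (k + 1) + (k + 1) := by ring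
      have e5 : k * J.card = k * q2 + k * (k + 1) := by rw [hq]; ring
      omega
  termination_by n => n

/-- The maximum independence number is attained. -/
lemma alpha_attained (S : Finset Ivl) :
    ∃ J : Finset Ivl, IsIndep S J ∧ J.card = alphaIvl S := by
  have h : alphaIvl S ∈ {n : ℕ | ∃ I : Finset Ivl, IsIndep S I ∧ I.card = n} := by
    apply Nat.sSup_mem
    · exact ⟨0, ∅, ⟨Finset.empty_subset _, by simp⟩, rfl⟩
    · refine ⟨S.card, fun n hn => ?_⟩
      obtain ⟨J, hJ, hc⟩ := hn
      exact hc ▸ Finset.card_le_card hJ.1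
  exact h

/-- There exists an absolute constant `c > 0` such that for every finite set `S` of
intervals, every integer `k ≥ 1`, and every `k`-maximal independent set `I ⊆ S`,
one has `|I| ≥ (1 - c / k) · α(S)`. -/
theorem stmt0 :
    ∃ c : ℝ, 0 < c ∧
      ∀ (S : Finset Ivl) (k : ℕ) (I : Finset Ivl), 1 ≤ k → IsKMaximal S k I →
        ((1 : ℝ) - c / (k : ℝ)) * (alphaIvl S : ℝ) ≤ (I.card : ℝ) := by
  refine ⟨1, one_pos, ?_⟩
  intro S k I hk hmax
  obtain ⟨J, hJindep, hJcard⟩ := alpha_attained S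
  set J2 := J \ I with hJ2def
  have hIindep := hmax.1
  -- Hall's condition for subsets of J2 of size at most k + 1
  have hHall : ∀ B ⊆ J2, B.card ≤ k + 1 → B.card ≤ (nbr I B).card := by
    intro B hB hBk
    by_contra hlt
    push_neg at hlt
    set m := B.card with hm
    have hm1 : 1 ≤ m := by omega
    set t := min (m - 1) I.card with ht
    have htk : t ≤ k := by omega
    have htI : t ≤ I.card := min_le_right _ _
    obtain ⟨B', hB'sub, hB'card⟩ := Finset.exists_subset_card_eq (s := B) (n := t + 1) (by omega)
    have hnB' : (nbr I B').card ≤ t := by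
      apply le_min
      · have h1 : nbr I B' ⊆ nbr I B := nbr_mono I hB'sub
        have := Finset.card_le_card h1
        omega
      · exact Finset.card_le_card (nbr_subset I B')
    obtain ⟨A, hnA, hAI, hAcard⟩ :=
      Finset.exists_subsuperset_card_eq (nbr_subset I B') hnB' htI
    have hB'SI : B' ⊆ S \ I := by
      intro y hy
      have hyJ2 : y ∈ J2 := hB (hB'sub hy)
      rw [hJ2def, Finset.mem_sdiff] at hyJ2
      rw [Finset.mem_sdiff]
      exact ⟨hJindep.1 hyJ2.1, hyJ2.2⟩
    apply hmax.2 t htk A hAI B' hB'SI hAcard hB'card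
    constructor
    · intro x hx
      rcases Finset.mem_union.mp hx with h | h
      · exact hIindep.1 (Finset.sdiff_subset h)
      · exact (Finset.mem_sdiff.mp (hB'SI h)).1
    · intro x hx y hy hxy
      rcases Finset.mem_union.mp hx with hx' | hx' <;>
        rcases Finset.mem_union.mp hy with hy' | hy'
      · exact hIindep.2 x (Finset.sdiff_subset hx') y (Finset.sdiff_subset hy') hxy
      · -- x ∈ I \ A, y ∈ B'
        intro hmeet
        have : x ∈ nbr I B' := mem_nbr.mpr ⟨Finset.sdiff_subset hx', y, hy', hmeet⟩
        exact (Finset.mem_sdiff.mp hx').2 (hnA this)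
      · -- x ∈ B', y ∈ I \ A
        intro hmeet
        have hmeet' : Ivl.meets y x := ⟨hmeet.2, hmeet.1⟩
        have : y ∈ nbr I B' := mem_nbr.mpr ⟨Finset.sdiff_subset hy', x, hx', hmeet'⟩
        exact (Finset.mem_sdiff.mp hy').2 (hnA this)
      · -- both in B' ⊆ J
        have hxJ : x ∈ J := Finset.sdiff_subset (hB (hB'sub hx'))
        have hyJ : y ∈ J := Finset.sdiff_subset (hB (hB'sub hy'))
        exact hJindep.2 x hxJ y hyJ hxy
  -- J2 is pairwise disjoint
  have hJ2pair : ∀ x ∈ J2, ∀ y ∈ J2, x ≠ y → ¬ Ivl.meets x y := fun x hx y hy hxy =>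
    hJindep.2 x (Finset.sdiff_subset hx) y (Finset.sdiff_subset hy) hxy
  have hkey := key_count k I hIindep.2 J2.card J2 rfl hJ2pair hHall
  -- nbr I J2 ⊆ I \ J
  have hsub : nbr I J2 ⊆ I \ J := by
    intro x hx
    obtain ⟨hxI, y, hy, hmeet⟩ := mem_nbr.mp hx
    rw [Finset.mem_sdiff]
    refine ⟨hxI, fun hxJ => ?_⟩
    have hyJ : y ∈ J := Finset.sdiff_subset hy
    have hxy : x ≠ y := fun h => (Finset.mem_sdiff.mp hy).2 (h ▸ hxI)
    exact hJindep.2 x hxJ y hyJ hxy hmeet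
  -- counting
  have hsplit : (J ∩ I).card + (J \ I).card = J.card :=
    Finset.card_inter_add_card_sdiff J I
  have hsplit2 : (I \ J).card + (I ∩ J).card = I.card :=
    Finset.card_sdiff_add_card_inter I J
  have hIJcomm : (I ∩ J).card = (J ∩ I).card := by rw [Finset.inter_comm]
  have hple : (nbr I J2).card ≤ (I \ J).card := Finset.card_le_card hsub
  -- derive k * α ≤ (k + 1) * |I| in ℕ
  have hnat : k * alphaIvl S ≤ (k + 1) * I.card := by
    set a := (J ∩ I).card
    set q := J2.card
    set p := (nbr I J2).card
    set d := (I \ J).card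
    have hα : alphaIvl S = a + q := by
      rw [← hJcard, ← hsplit]
    rw [hα]
    have h1 : k * (a + q) = k * a + k * q := by ring
    have h2 : (k + 1) * p ≤ (k + 1) * d := Nat.mul_le_mul_left _ hple
    have h3 : (k + 1) * d = k * d + d := by ring
    have h4 : d + a = I.card := by omega
    have h5 : (k + 1) * I.card = k * I.card + I.card := by ring
    have h6 : k * I.card = k * d + k * a := by rw [← h4]; ring
    omega
  -- cast to ℝ and finish
  have hkpos : (0 : ℝ) < (k : ℝ) := by exact_mod_cast Nat.pos_of_ne_zero (by omega)
  have hk1 : (1 : ℝ) ≤ (k : ℝ) := by exact_mod_cast hk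
  have hcast : (k : ℝ) * (alphaIvl S : ℝ) ≤ ((k : ℝ) + 1) * (I.card : ℝ) := by
    have := hnat
    push_cast
    exact_mod_cast this
  have hα0 : (0 : ℝ) ≤ (alphaIvl S : ℝ) := Nat.cast_nonneg _
  have hI0 : (0 : ℝ) ≤ (I.card : ℝ) := Nat.cast_nonneg _
  have key2 : ((k : ℝ) - 1) * (alphaIvl S : ℝ) ≤ (k : ℝ) * (I.card : ℝ) := by
    nlinarith [mul_le_mul_of_nonneg_left hcast (by linarith : (0 : ℝ) ≤ (k : ℝ) - 1)]
  have heq : ((1 : ℝ) - 1 / (k : ℝ)) * (alphaIvl S : ℝ)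
      = (((k : ℝ) - 1) * (alphaIvl S : ℝ)) / (k : ℝ) := by
    field_simp
  rw [heq, div_le_iff₀ hkpos]
  nlinarith [key2]
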